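/- Let u, v : ℕ → [0,∞) be nonnegative sequences, K ∈ ℕ, and C, B ∈ [0,∞). Suppose that v(n) ≤ u(n) for all n, and that u(n) ≤ C · Σ_{i=0}^{min(K,n)} v(n−i) + B·𝟙[n ≤ K] for all n. If limsup_{n→∞} v(n)^{1/n} = L for some L ∈ (0,∞), then limsup_{n→∞} u(n)^{1/n} = L. -/
import Mathlib

open Filter

private lemma aux_tendsto_rpow_one_div {A : ℝ} (hA : 0 < A) :
    Tendsto (fun n : ℕ => A ^ (1 / (n : ℝ))) atTop (nhds 1) := by
  have h1 : Tendsto (fun n : ℕ => Real.log A * (1 / (n : ℝ))) atTop (nhds 0) := by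
    simpa using (tendsto_one_div_atTop_nhds_zero_nat).const_mul (Real.log A)
  have h2 := (Real.continuous_exp.tendsto 0).comp h1
  simp only [Function.comp_def, Real.exp_zero] at h2
  exact h2.congr fun n => (Real.rpow_def_of_pos hA (1 / (n : ℝ))).symm

theorem stmt10 (u v : ℕ → ℝ) (hv0 : ∀ n, 0 ≤ v n) (K : ℕ) (C B : ℝ)
    (hC : 0 ≤ C) (hB : 0 ≤ B)
    (hvu : ∀ n, v n ≤ u n)
    (hu : ∀ n, u n ≤ C * (∑ i ∈ Finset.range (min K n + 1), v (n - i)) +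
      B * (if n ≤ K then 1 else 0))
    (L : ℝ) (hL : 0 < L)
    (hlim : Filter.limsup (fun n : ℕ => (v n) ^ (1 / (n : ℝ))) Filter.atTop = L) :
    Filter.limsup (fun n : ℕ => (u n) ^ (1 / (n : ℝ))) Filter.atTop = L := by
  set a : ℕ → ℝ := fun n => v n ^ (1 / (n : ℝ)) with ha
  set b : ℕ → ℝ := fun n => u n ^ (1 / (n : ℝ)) with hb
  have hu0 : ∀ n, 0 ≤ u n := fun n => (hv0 n).trans (hvu n)
  have hab : ∀ n, a n ≤ b n := fun n =>
    Real.rpow_le_rpow (hv0 n) (hvu n) (by positivity)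
  have hb0 : ∀ n, 0 ≤ b n := fun n => Real.rpow_nonneg (hu0 n) _
  -- a is bounded above
  have hbd : IsBoundedUnder (· ≤ ·) atTop a := by
    by_contra h
    have hempty : {c : ℝ | ∀ᶠ n in atTop, a n ≤ c} = ∅ := by
      ext c
      simp only [Set.mem_setOf_eq, Set.mem_empty_iff_false, iff_false]
      intro hc
      exact h ⟨c, eventually_map.2 hc⟩
    rw [limsup_eq, hempty, Real.sInf_empty] at hlim
    exact hL.ne' hlim.symm
  have key : ∀ ε : ℝ, 0 < ε → ∀ᶠ n in atTop, b n ≤ L + ε := by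
    intro ε hε
    set M := L + ε / 2 with hMdef
    have hM : 0 < M := by rw [hMdef]; linarith
    have hMlt : M < L + ε := by rw [hMdef]; linarith
    have hev : ∀ᶠ n in atTop, a n < M :=
      eventually_lt_of_limsup_lt (by rw [hlim, hMdef]; linarith) hbd
    obtain ⟨N₀, hN₀⟩ := eventually_atTop.1 hev
    have hvpow : ∀ m, N₀ ≤ m → 1 ≤ m → v m ≤ M ^ m := by
      intro m hm hm1
      have h1 : a m ≤ M := (hN₀ m hm).le
      have hm0 : (m : ℝ) ≠ 0 := by exact_mod_cast Nat.one_le_iff_ne_zero.mp hm1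
      have h2 : v m = (a m) ^ m := by
        rw [ha]
        rw [← Real.rpow_natCast (v m ^ (1 / (m : ℝ))) m, ← Real.rpow_mul (hv0 m),
          one_div, inv_mul_cancel₀ hm0, Real.rpow_one]
      rw [h2]
      exact pow_le_pow_left₀ (Real.rpow_nonneg (hv0 m) _) h1 m
    set D := (max 1 M⁻¹) ^ K with hDdef
    have hD0 : 0 ≤ D := pow_nonneg (le_trans zero_le_one (le_max_left _ _)) K
    set A := max (C * ((K + 1) * D)) 1 with hAdef
    have hA1 : (1 : ℝ) ≤ A := le_max_right _ _
    have hA0 : (0 : ℝ) < A := lt_of_lt_of_le one_pos hA1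
    have hun : ∀ n, N₀ + K + 1 ≤ n → u n ≤ A * M ^ n := by
      intro n hn
      have hKn : K < n := by omega
      have hifzero : (if n ≤ K then (1 : ℝ) else 0) = 0 := if_neg (by omega)
      have hmin : min K n = K := min_eq_left hKn.le
      have hsum : ∑ i ∈ Finset.range (min K n + 1), v (n - i) ≤ (K + 1) * (D * M ^ n) := by
        rw [hmin]
        have hterm : ∀ i ∈ Finset.range (K + 1), v (n - i) ≤ D * M ^ n := by
          intro i hi
          have hiK : i ≤ K := Nat.lt_succ_iff.mp (Finset.mem_range.mp hi)
          have h1 : v (n - i) ≤ M ^ (n - i) := hvpow _ (by omega) (by omega)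
          have hsplit : M ^ n = M ^ (n - i) * M ^ i := by
            rw [← pow_add]; congr 1; omega
          have hMi : (0 : ℝ) < M ^ i := pow_pos hM i
          have h3 : M ^ (n - i) = M ^ n * (M⁻¹) ^ i := by
            rw [inv_pow, hsplit]; field_simp
          have h4 : (M⁻¹) ^ i ≤ D := by
            calc (M⁻¹) ^ i ≤ (max 1 M⁻¹) ^ i :=
                  pow_le_pow_left₀ (inv_nonneg.2 hM.le) (le_max_right _ _) i
              _ ≤ (max 1 M⁻¹) ^ K := pow_le_pow_right₀ (le_max_left _ _) hiK
          have h5 : M ^ (n - i) ≤ D * M ^ n := by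
            rw [h3, mul_comm (M ^ n)]
            exact mul_le_mul_of_nonneg_right h4 (pow_pos hM n).le
          exact h1.trans h5
        calc ∑ i ∈ Finset.range (K + 1), v (n - i)
            ≤ ∑ _i ∈ Finset.range (K + 1), D * M ^ n := Finset.sum_le_sum hterm
          _ = (K + 1) * (D * M ^ n) := by
              rw [Finset.sum_const, Finset.card_range, nsmul_eq_mul]
              push_cast; ring
      have := hu n
      rw [hifzero, mul_zero, add_zero] at this
      have h6 : C * (∑ i ∈ Finset.range (min K n + 1), v (n - i)) ≤
          C * ((K + 1) * (D * M ^ n)) := mul_le_mul_of_nonneg_left hsum hC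
      have h7 : C * ((K + 1) * (D * M ^ n)) = (C * ((K + 1) * D)) * M ^ n := by ring
      have h8 : (C * ((K + 1) * D)) * M ^ n ≤ A * M ^ n :=
        mul_le_mul_of_nonneg_right (le_max_left _ _) (pow_pos hM n).le
      linarith
    have htend : Tendsto (fun n : ℕ => A ^ (1 / (n : ℝ)) * M) atTop (nhds M) := by
      simpa using (aux_tendsto_rpow_one_div hA0).mul_const M
    have hev2 : ∀ᶠ n : ℕ in atTop, A ^ (1 / (n : ℝ)) * M ≤ L + ε :=
      (htend.eventually_lt_const hMlt).mono fun n h => h.le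
    filter_upwards [eventually_ge_atTop (N₀ + K + 1), hev2] with n hn1 hn2
    have hn0 : (n : ℝ) ≠ 0 := by
      have : 1 ≤ n := by omega
      exact_mod_cast Nat.one_le_iff_ne_zero.mp this
    have hle : b n ≤ (A * M ^ n) ^ (1 / (n : ℝ)) :=
      Real.rpow_le_rpow (hu0 n) (hun n hn1) (by positivity)
    have heq : (A * M ^ n) ^ (1 / (n : ℝ)) = A ^ (1 / (n : ℝ)) * M := by
      rw [Real.mul_rpow hA0.le (pow_pos hM n).le]
      congr 1
      rw [← Real.rpow_natCast M n, ← Real.rpow_mul hM.le, mul_one_div,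
        div_self hn0, Real.rpow_one]
    rw [heq] at hle
    exact hle.trans hn2
  have bddb : IsBoundedUnder (· ≤ ·) atTop b := ⟨L + 1, eventually_map.2 (key 1 one_pos)⟩
  have cobb : IsCoboundedUnder (· ≤ ·) atTop b :=
    isCoboundedUnder_le_of_le atTop hb0
  have coba : IsCoboundedUnder (· ≤ ·) atTop a :=
    isCoboundedUnder_le_of_le atTop fun n => Real.rpow_nonneg (hv0 n) _
  have h1 : L ≤ limsup b atTop := by
    rw [← hlim]
    exact limsup_le_limsup (Eventually.of_forall hab) coba bddb
  have h2 : limsup b atTop ≤ L := by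
    refine le_of_forall_pos_le_add fun ε hε => ?_
    exact limsup_le_of_le cobb (key ε hε)
  exact le_antisymm h2 h1
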